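/- Let n ≥ 1 be an integer and a a real constant. Let h be a homogeneous polynomial of degree k on ℝ^{n+1}, even with respect to x_{n+1}, satisfying Δ̃_{n+1,a} h = 0. Then for every real t and every positive integer m, on ℝ^{n+1} \ {0}: (Δ̃_{n+1,a})^m ( |x|^{t} h(x/|x|) ) = A_{m,t} |x|^{t−2m} h(x/|x|), where A_{m,t} = ∏_{j=0}^{m−1} [ (t−2j)(t−2j+n+2a−2) − k(k+n+2a−2) ]; moreover (Δ̃_{n+1,a})^m ( |x|^{2m−n−2a−t} h(x/|x|) ) = A_{m,t} |x|^{−n−2a−t} h(x/|x|), i.e. the constant B_{m,t} = ∏_{j=0}^{m−1} [ (2m−n−2a−t−2j)(2m−t−2j−2) − k(k+n+2a−2) ] equals A_{m,t}. -/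

import Mathlib

open MeasureTheory Metric Filter Function Topology

/-- First-order partial derivative in the `i`-th coordinate direction. -/
noncomputable def pderiv' {m : ℕ} (i : Fin m) (f : EuclideanSpace ℝ (Fin m) → ℝ)
    (x : EuclideanSpace ℝ (Fin m)) : ℝ :=
  fderiv ℝ f x (EuclideanSpace.single i 1)

/-- The degenerate elliptic operator `Δ̃_{n+1,a} u = Σ ∂²u/∂x_i² + ((2a−1)/x_{n+1}) ∂u/∂x_{n+1}`;
on the hyperplane `{x_{n+1} = 0}` it is interpreted by its continuous extension, which (for
functions even in `x_{n+1}`) equals `Σ ∂²u/∂x_i² + (2a−1) ∂²u/∂x_{n+1}²`. -/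
noncomputable def deltaTilde (n : ℕ) (a : ℝ)
    (f : EuclideanSpace ℝ (Fin (n + 1)) → ℝ) (x : EuclideanSpace ℝ (Fin (n + 1))) : ℝ :=
  (∑ i, pderiv' i (pderiv' i f) x) +
    (if x (Fin.last n) = 0 then (2 * a - 1) * pderiv' (Fin.last n) (pderiv' (Fin.last n) f) x
     else ((2 * a - 1) / x (Fin.last n)) * pderiv' (Fin.last n) f x)

/-- `(−Δ̃_{n+1,a})^k`. -/
noncomputable def negDeltaIter (n : ℕ) (a : ℝ) (k : ℕ)
    (f : EuclideanSpace ℝ (Fin (n + 1)) → ℝ) : EuclideanSpace ℝ (Fin (n + 1)) → ℝ :=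
  (fun g x => -deltaTilde n a g x)^[k] f

/-- Evenness with respect to the last coordinate `x_{n+1}`. -/
def EvenLast (n : ℕ) (f : EuclideanSpace ℝ (Fin (n + 1)) → ℝ) : Prop :=
  ∀ x : EuclideanSpace ℝ (Fin (n + 1)),
    f (WithLp.toLp 2 (Function.update x (Fin.last n) (-x (Fin.last n)))) = f x

/-- The weighted functions `v_i = |x_{n+1}|^{2a−1} (−Δ̃_{n+1,a})^i u` for `i < p`, and
`v_p = |x_{n+1}|^{2a−1} |x|^{−τ} u^α`. -/
noncomputable def vFun (n p : ℕ) (a τ α : ℝ) (u : EuclideanSpace ℝ (Fin (n + 1)) → ℝ)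
    (i : ℕ) (x : EuclideanSpace ℝ (Fin (n + 1))) : ℝ :=
  if i < p then |x (Fin.last n)| ^ (2 * a - 1) * negDeltaIter n a i u x
  else |x (Fin.last n)| ^ (2 * a - 1) * (‖x‖ ^ (-τ) * u x ^ α)


open MvPolynomial

variable {M : ℕ}

noncomputable def polyFun (Q : MvPolynomial (Fin M) ℝ) (y : EuclideanSpace ℝ (Fin M)) : ℝ :=
  MvPolynomial.eval (fun i => y i) Q

noncomputable def polyD (Q : MvPolynomial (Fin M) ℝ) (x : EuclideanSpace ℝ (Fin M)) :
    EuclideanSpace ℝ (Fin M) →L[ℝ] ℝ :=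
  ∑ i, polyFun (pderiv i Q) x • (EuclideanSpace.proj i : EuclideanSpace ℝ (Fin M) →L[ℝ] ℝ)

lemma polyD_apply (Q : MvPolynomial (Fin M) ℝ) (x v : EuclideanSpace ℝ (Fin M)) :
    polyD Q x v = ∑ i, polyFun (pderiv i Q) x * v i := by
  simp [polyD]

lemma hasFDerivAt_polyFun (Q : MvPolynomial (Fin M) ℝ) (x : EuclideanSpace ℝ (Fin M)) :
    HasFDerivAt (polyFun Q) (polyD Q x) x := by
  induction Q using MvPolynomial.induction_on with
  | C r =>
    have h0 : polyD (C r) (M := M) x = 0 := by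
      apply ContinuousLinearMap.ext; intro v
      simp [polyD_apply, polyFun]
    rw [h0]
    have : polyFun (C r) (M := M) = fun _ => r := by
      funext y; simp [polyFun]
    rw [this]
    exact hasFDerivAt_const _ _
  | add p q hp hq =>
    have heq : polyD (p + q) x = polyD p x + polyD q x := by
      apply ContinuousLinearMap.ext; intro v
      simp [polyD_apply, polyFun, Finset.sum_add_distrib, add_mul]
    have hfun : polyFun (p + q) (M := M) = fun y => polyFun p y + polyFun q y := by
      funext y; simp [polyFun]
    rw [heq, hfun]
    exact hp.add hq
  | mul_X p i hp =>
    have hXi : HasFDerivAt (fun y : EuclideanSpace ℝ (Fin M) => y i)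
        (EuclideanSpace.proj i : EuclideanSpace ℝ (Fin M) →L[ℝ] ℝ) x :=
      (EuclideanSpace.proj i : EuclideanSpace ℝ (Fin M) →L[ℝ] ℝ).hasFDerivAt
    have hmul := hp.mul hXi
    have heq : polyFun p x • (EuclideanSpace.proj i : EuclideanSpace ℝ (Fin M) →L[ℝ] ℝ)
        + x i • polyD p x = polyD (p * X i) x := by
      apply ContinuousLinearMap.ext; intro v
      simp only [polyD_apply, ContinuousLinearMap.add_apply, ContinuousLinearMap.smul_apply,
        PiLp.proj_apply, smul_eq_mul]
      have : ∀ j, polyFun (pderiv j (p * X i)) x * v j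
          = (x i * (polyFun (pderiv j p) x * v j)) + (if j = i then polyFun p x * v j else 0) := by
        intro j
        rw [pderiv_mul]
        by_cases hji : j = i
        · subst hji; simp [polyFun, pderiv_X_self]; ring
        · simp [polyFun, pderiv_X_of_ne (Ne.symm hji), hji]; ring
      rw [Finset.sum_congr rfl fun j _ => this j]
      rw [Finset.sum_add_distrib, ← Finset.mul_sum, Finset.sum_ite_eq' Finset.univ i]
      simp [add_comm]
    have hfun : polyFun (p * X i) (M := M) = fun y => polyFun p y * y i := by
      funext y; simp [polyFun]
    rw [← heq, hfun]
    exact hmul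

lemma degree_sum_eq {d : Fin M →₀ ℕ} {k : ℕ} (h : (Finsupp.weight 1) d = k) :
    ∑ i : Fin M, d i = k := by
  rw [Finsupp.weight_apply] at h
  rw [← h, Finsupp.sum]
  rw [Finset.sum_subset (Finset.subset_univ d.support)]
  · simp
  · intro i _ hi; simp [Finsupp.notMem_support_iff.mp hi]

lemma polyFun_smul {Q : MvPolynomial (Fin M) ℝ} {k : ℕ} (hQ : Q.IsHomogeneous k)
    (c : ℝ) (x : EuclideanSpace ℝ (Fin M)) :
    polyFun Q (c • x) = c ^ k * polyFun Q x := by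
  unfold polyFun
  rw [eval_eq', eval_eq', Finset.mul_sum]
  apply Finset.sum_congr rfl
  intro d hd
  have hsum : ∑ i : Fin M, d i = k := degree_sum_eq (hQ (mem_support_iff.mp hd))
  have : ∀ i : Fin M, ((c • x : EuclideanSpace ℝ (Fin M)) i : ℝ) ^ d i
      = c ^ d i * (x i) ^ d i := by
    intro i
    rw [show ((c • x : EuclideanSpace ℝ (Fin M)) i : ℝ) = c * x i from rfl, mul_pow]
  rw [Finset.prod_congr rfl fun i _ => this i, Finset.prod_mul_distrib,
    Finset.prod_pow_eq_pow_sum, hsum]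
  ring

lemma euler {Q : MvPolynomial (Fin M) ℝ} {k : ℕ} (hQ : Q.IsHomogeneous k)
    (x : EuclideanSpace ℝ (Fin M)) :
    ∑ i, x i * polyFun (pderiv i Q) x = (k : ℝ) * polyFun Q x := by
  have hline : HasDerivAt (fun c : ℝ => c • x) x 1 := by
    simpa using (hasDerivAt_id (1:ℝ)).smul_const x
  have h1 : HasDerivAt (fun c : ℝ => polyFun Q (c • x)) (polyD Q x x) 1 := by
    have := (hasFDerivAt_polyFun Q ((1:ℝ) • x)).comp_hasDerivAt 1 hline
    rw [one_smul] at this; exact this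
  have h2 : HasDerivAt (fun c : ℝ => polyFun Q (c • x)) ((k : ℝ) * polyFun Q x) 1 := by
    have hfe : (fun c : ℝ => polyFun Q (c • x)) = fun c : ℝ => c ^ k * polyFun Q x := by
      funext c; exact polyFun_smul hQ c x
    rw [hfe]
    simpa using (hasDerivAt_pow k (1:ℝ)).mul_const (polyFun Q x)
  have := h1.unique h2
  rw [← this, polyD_apply]
  apply Finset.sum_congr rfl
  intro i _; ring

noncomputable def gFun (c : ℝ) (Q : MvPolynomial (Fin M) ℝ) (y : EuclideanSpace ℝ (Fin M)) : ℝ :=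
  ‖y‖ ^ c * polyFun Q y

lemma norm_rpow_eq (c : ℝ) (y : EuclideanSpace ℝ (Fin M)) :
    ‖y‖ ^ c = ((‖y‖ ^ 2 : ℝ)) ^ (c / 2) := by
  rw [← Real.rpow_natCast ‖y‖ 2, ← Real.rpow_mul (norm_nonneg y)]
  congr 1
  push_cast
  ring

lemma hasFDerivAt_normPow (c : ℝ) {x : EuclideanSpace ℝ (Fin M)} (hx : x ≠ 0) :
    HasFDerivAt (fun y : EuclideanSpace ℝ (Fin M) => ‖y‖ ^ c)
      ((c * ‖x‖ ^ (c - 2)) • (innerSL ℝ x)) x := by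
  have hnorm : (0:ℝ) < ‖x‖ := norm_pos_iff.mpr hx
  have h2 : HasFDerivAt (fun y : EuclideanSpace ℝ (Fin M) => (‖y‖ ^ 2 : ℝ))
      (2 • (innerSL ℝ x)) x := by
    have := (hasFDerivAt_id x).norm_sq
    simpa using this
  have hne : (‖x‖ ^ 2 : ℝ) ≠ 0 := by positivity
  have h3 := h2.rpow_const (p := c / 2) (Or.inl hne)
  have hfe : (fun y : EuclideanSpace ℝ (Fin M) => ‖y‖ ^ c)
      = fun y => ((‖y‖ ^ 2 : ℝ)) ^ (c / 2) := funext fun y => norm_rpow_eq c y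
  rw [hfe]
  refine h3.congr_fderiv ?_
  apply ContinuousLinearMap.ext; intro v
  have hpow : ((‖x‖ ^ 2 : ℝ)) ^ (c / 2 - 1) = ‖x‖ ^ (c - 2) := by
    rw [← Real.rpow_natCast ‖x‖ 2, ← Real.rpow_mul (norm_nonneg x)]
    norm_num
    ring_nf
  simp only [ContinuousLinearMap.smul_apply, smul_eq_mul, ContinuousLinearMap.coe_smul',
    Pi.smul_apply]
  rw [hpow]
  push_cast
  ring

lemma hasFDerivAt_gFun (c : ℝ) (Q : MvPolynomial (Fin M) ℝ) {x : EuclideanSpace ℝ (Fin M)}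
    (hx : x ≠ 0) :
    HasFDerivAt (gFun c Q)
      ((‖x‖ ^ c) • polyD Q x + (polyFun Q x * (c * ‖x‖ ^ (c - 2))) • (innerSL ℝ x)) x := by
  have := (hasFDerivAt_normPow c hx).mul (hasFDerivAt_polyFun Q x)
  refine this.congr_fderiv ?_
  apply ContinuousLinearMap.ext; intro v
  simp only [ContinuousLinearMap.add_apply, ContinuousLinearMap.smul_apply, smul_eq_mul]
  ring

lemma inner_single (x : EuclideanSpace ℝ (Fin M)) (i : Fin M) :
    (innerSL ℝ x) (EuclideanSpace.single i 1) = x i := by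
  simp [EuclideanSpace.inner_single_right]

lemma pderiv'_gFun (c : ℝ) (Q : MvPolynomial (Fin M) ℝ) {x : EuclideanSpace ℝ (Fin M)}
    (hx : x ≠ 0) (i : Fin M) :
    pderiv' i (gFun c Q) x
      = c * ‖x‖ ^ (c - 2) * x i * polyFun Q x + ‖x‖ ^ c * polyFun (MvPolynomial.pderiv i Q) x := by
  rw [pderiv', (hasFDerivAt_gFun c Q hx).fderiv]
  simp only [ContinuousLinearMap.add_apply, ContinuousLinearMap.smul_apply, smul_eq_mul,
    inner_single, polyD_apply]
  have : ∑ j, polyFun (MvPolynomial.pderiv j Q) x * (EuclideanSpace.single i (1:ℝ)) j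
      = polyFun (MvPolynomial.pderiv i Q) x := by
    rw [Finset.sum_eq_single i]
    · simp
    · intro j _ hj; simp [EuclideanSpace.single_apply, hj]
    · simp
  rw [this]
  ring

lemma polyFun_X_mul (Q : MvPolynomial (Fin M) ℝ) (i : Fin M) (y : EuclideanSpace ℝ (Fin M)) :
    polyFun (MvPolynomial.X i * Q) y = y i * polyFun Q y := by
  simp [polyFun]

lemma pderiv'_polyFun (Q : MvPolynomial (Fin M) ℝ) (i : Fin M) :
    pderiv' i (polyFun Q) = polyFun (MvPolynomial.pderiv i Q) := by
  funext x
  rw [pderiv', (hasFDerivAt_polyFun Q x).fderiv, polyD_apply]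
  rw [Finset.sum_eq_single i]
  · simp
  · intro j _ hj; simp [EuclideanSpace.single_apply, hj]
  · simp

lemma deltaTilde_polyFun (n : ℕ) (a : ℝ) (Q : MvPolynomial (Fin (n+1)) ℝ)
    (x : EuclideanSpace ℝ (Fin (n+1))) :
    deltaTilde n a (polyFun Q) x
      = (∑ i, polyFun (MvPolynomial.pderiv i (MvPolynomial.pderiv i Q)) x)
        + (if x (Fin.last n) = 0 then
            (2 * a - 1) * polyFun (MvPolynomial.pderiv (Fin.last n)
              (MvPolynomial.pderiv (Fin.last n) Q)) x
          else ((2 * a - 1) / x (Fin.last n)) * polyFun (MvPolynomial.pderiv (Fin.last n) Q) x) := by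
  simp only [deltaTilde, pderiv'_polyFun]

lemma deltaTilde_congr {n : ℕ} {a : ℝ} {f g : EuclideanSpace ℝ (Fin (n+1)) → ℝ}
    {x : EuclideanSpace ℝ (Fin (n+1))} (hfg : f =ᶠ[nhds x] g) :
    deltaTilde n a f x = deltaTilde n a g x := by
  have h1 : ∀ i : Fin (n+1), pderiv' i f =ᶠ[nhds x] pderiv' i g := by
    intro i
    filter_upwards [hfg.fderiv (𝕜 := ℝ)] with y hy
    simp [pderiv', hy]
  have h2 : ∀ i : Fin (n+1), pderiv' i (pderiv' i f) x = pderiv' i (pderiv' i g) x := by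
    intro i
    simp [pderiv', (h1 i).fderiv_eq]
  have h3 : pderiv' (Fin.last n) f x = pderiv' (Fin.last n) g x := by
    simp [pderiv', hfg.fderiv_eq]
  simp only [deltaTilde]
  rw [Finset.sum_congr rfl fun i _ => h2 i, h2, h3]

lemma pderiv2_gFun (c : ℝ) (Q : MvPolynomial (Fin M) ℝ) {x : EuclideanSpace ℝ (Fin M)}
    (hx : x ≠ 0) (i : Fin M) :
    pderiv' i (pderiv' i (gFun c Q)) x
      = c * ((c-2) * ‖x‖ ^ (c-4) * x i * (x i * polyFun Q x)
            + ‖x‖ ^ (c-2) * (polyFun Q x + x i * polyFun (MvPolynomial.pderiv i Q) x))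
        + (c * ‖x‖ ^ (c-2) * x i * polyFun (MvPolynomial.pderiv i Q) x
            + ‖x‖ ^ c * polyFun (MvPolynomial.pderiv i (MvPolynomial.pderiv i Q)) x) := by
  set A := gFun (c-2) (MvPolynomial.X i * Q) with hA_def
  set B := gFun c (MvPolynomial.pderiv i Q) with hB_def
  have hU : ∀ y : EuclideanSpace ℝ (Fin M), y ≠ 0 →
      pderiv' i (gFun c Q) y = c * A y + B y := by
    intro y hy
    rw [pderiv'_gFun c Q hy i, hA_def, hB_def]
    simp only [gFun, polyFun_X_mul]
    ring
  have hmem : {y : EuclideanSpace ℝ (Fin M) | y ≠ 0} ∈ nhds x :=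
    (isOpen_compl_singleton).mem_nhds hx
  have hev : pderiv' i (gFun c Q) =ᶠ[nhds x] (fun y => c * A y + B y) :=
    Filter.eventuallyEq_of_mem hmem hU
  have hA := hasFDerivAt_gFun (c-2) (MvPolynomial.X i * Q) hx
  have hB := hasFDerivAt_gFun c (MvPolynomial.pderiv i Q) hx
  have hG := (hA.const_mul c).add hB
  have : pderiv' i (pderiv' i (gFun c Q)) x
      = c * pderiv' i A x + pderiv' i B x := by
    rw [pderiv', hev.fderiv_eq, (show HasFDerivAt (fun y => c * A y + B y) _ x from hG).fderiv, pderiv', hA.fderiv, pderiv', hB.fderiv]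
    simp
    try ring
  rw [this, hA_def, hB_def, pderiv'_gFun _ _ hx i, pderiv'_gFun _ _ hx i]
  have hexp : c - 2 - 2 = c - 4 := by ring
  rw [hexp, polyFun_X_mul]
  have hpd : polyFun (MvPolynomial.pderiv i (MvPolynomial.X i * Q)) x
      = polyFun Q x + x i * polyFun (MvPolynomial.pderiv i Q) x := by
    simp [polyFun, MvPolynomial.pderiv_mul]
    try ring
  rw [hpd]
  try ring

lemma sum_self_mul_self (x : EuclideanSpace ℝ (Fin M)) :
    ∑ i, x i * x i = ‖x‖ ^ (2:ℝ) := by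
  have h1 : (‖x‖ : ℝ) ^ (2:ℝ) = ‖x‖ ^ (2:ℕ) := by
    rw [← Real.rpow_natCast ‖x‖ 2]; norm_num
  rw [h1, ← real_inner_self_eq_norm_sq]
  simp only [PiLp.inner_apply, RCLike.inner_apply, conj_trivial, mul_comm]

lemma step_main (n : ℕ) (a : ℝ) (k : ℕ) (c : ℝ) (Q : MvPolynomial (Fin (n+1)) ℝ)
    (hQ : Q.IsHomogeneous k) (hharm : ∀ x, deltaTilde n a (polyFun Q) x = 0)
    {x : EuclideanSpace ℝ (Fin (n+1))} (hx : x ≠ 0) :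
    deltaTilde n a (gFun c Q) x
      = (c * (c + 2*(k:ℝ) + (n:ℝ) + 2*a - 2)) * (‖x‖ ^ (c-2) * polyFun Q x) := by
  have hpos : (0:ℝ) < ‖x‖ := norm_pos_iff.mpr hx
  have h42 : ‖x‖ ^ (c-4) * ‖x‖ ^ (2:ℝ) = ‖x‖ ^ (c-2) := by
    rw [← Real.rpow_add hpos]; ring_nf
  have heuler := euler hQ x
  have hharm' := hharm x
  rw [deltaTilde_polyFun] at hharm'
  have hterm : ∀ i : Fin (n+1), pderiv' i (pderiv' i (gFun c Q)) x
      = (c*(c-2)*(polyFun Q x)) * (‖x‖^(c-4)) * (x i * x i)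
        + (c*(‖x‖^(c-2) * polyFun Q x))
        + (2*c*‖x‖^(c-2)) * (x i * polyFun (MvPolynomial.pderiv i Q) x)
        + ‖x‖^c * polyFun (MvPolynomial.pderiv i (MvPolynomial.pderiv i Q)) x := by
    intro i; rw [pderiv2_gFun c Q hx i]; ring
  have hsum : ∑ i, pderiv' i (pderiv' i (gFun c Q)) x
      = c*(c-2) * (‖x‖^(c-2) * polyFun Q x) + c*((n:ℝ)+1) * (‖x‖^(c-2) * polyFun Q x)
        + 2*c*(k:ℝ) * (‖x‖^(c-2) * polyFun Q x)
        + ‖x‖^c * ∑ i, polyFun (MvPolynomial.pderiv i (MvPolynomial.pderiv i Q)) x := by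
    rw [Finset.sum_congr rfl fun i _ => hterm i]
    rw [Finset.sum_add_distrib, Finset.sum_add_distrib, Finset.sum_add_distrib]
    have haveA : ∑ i, (c*(c-2)*(polyFun Q x)) * (‖x‖^(c-4)) * (x i * x i)
        = c*(c-2) * (‖x‖^(c-2) * polyFun Q x) := by
      rw [← Finset.mul_sum, sum_self_mul_self]
      linear_combination (c*(c-2)*(polyFun Q x)) * h42
    have haveB : ∑ _i : Fin (n+1), c*(‖x‖^(c-2) * polyFun Q x)
        = ((n:ℝ)+1) * (c * (‖x‖^(c-2) * polyFun Q x)) := by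
      rw [Finset.sum_const, Finset.card_univ, Fintype.card_fin, nsmul_eq_mul]
      push_cast
      ring
    have haveC : ∑ i, (2*c*‖x‖^(c-2)) * (x i * polyFun (MvPolynomial.pderiv i Q) x)
        = (2*c*‖x‖^(c-2)) * ((k:ℝ) * polyFun Q x) := by
      rw [← Finset.mul_sum, heuler]
    have haveD : ∑ i, ‖x‖^c * polyFun (MvPolynomial.pderiv i (MvPolynomial.pderiv i Q)) x
        = ‖x‖^c * ∑ i, polyFun (MvPolynomial.pderiv i (MvPolynomial.pderiv i Q)) x :=
      (Finset.mul_sum _ _ _).symm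
    rw [haveA, haveB, haveC, haveD]
    ring
  by_cases hL : x (Fin.last n) = 0
  · rw [if_pos hL] at hharm'
    simp only [deltaTilde, if_pos hL]
    rw [hsum, pderiv2_gFun c Q hx (Fin.last n), hL]
    push_cast
    linear_combination (‖x‖^c) * hharm'
  · rw [if_neg hL] at hharm'
    simp only [deltaTilde, if_neg hL]
    rw [hsum, pderiv'_gFun c Q hx (Fin.last n)]
    have hsplit : ((2*a-1)/x (Fin.last n)) * (c * ‖x‖^(c-2) * x (Fin.last n) * polyFun Q x
          + ‖x‖^c * polyFun (MvPolynomial.pderiv (Fin.last n) Q) x)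
        = (2*a-1) * c * (‖x‖^(c-2) * polyFun Q x)
          + ‖x‖^c * (((2*a-1)/x (Fin.last n)) * polyFun (MvPolynomial.pderiv (Fin.last n) Q) x) := by
      field_simp
    rw [hsplit]
    push_cast
    linear_combination (‖x‖^c) * hharm'

lemma iter_congr {n : ℕ} {a : ℝ} (m : ℕ) {f g : EuclideanSpace ℝ (Fin (n+1)) → ℝ}
    (hfg : ∀ y : EuclideanSpace ℝ (Fin (n+1)), y ≠ 0 → f y = g y) :
    ∀ x : EuclideanSpace ℝ (Fin (n+1)), x ≠ 0 →
      (deltaTilde n a)^[m] f x = (deltaTilde n a)^[m] g x := by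
  induction m with
  | zero => exact hfg
  | succ m ih =>
    intro x hx
    rw [Function.iterate_succ_apply', Function.iterate_succ_apply']
    exact deltaTilde_congr
      (Filter.eventuallyEq_of_mem ((isOpen_compl_singleton).mem_nhds hx) ih)

lemma harm_C_mul {n : ℕ} {a : ℝ} (A : ℝ) {Q : MvPolynomial (Fin (n+1)) ℝ}
    (hharm : ∀ x, deltaTilde n a (polyFun Q) x = 0) :
    ∀ x, deltaTilde n a (polyFun (MvPolynomial.C A * Q)) x = 0 := by
  intro x
  have hh := hharm x
  rw [deltaTilde_polyFun] at hh
  rw [deltaTilde_polyFun]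
  simp only [MvPolynomial.pderiv_C_mul, polyFun, MvPolynomial.eval_mul, MvPolynomial.eval_C]
  simp only [polyFun] at hh
  by_cases hL : x (Fin.last n) = 0
  · rw [if_pos hL] at hh ⊢
    rw [← Finset.mul_sum]
    linear_combination A * hh
  · rw [if_neg hL] at hh ⊢
    rw [← Finset.mul_sum]
    linear_combination A * hh

lemma iter_gFun (n : ℕ) (a : ℝ) (k : ℕ) (c : ℝ) (Q : MvPolynomial (Fin (n+1)) ℝ)
    (hQ : Q.IsHomogeneous k) (hharm : ∀ x, deltaTilde n a (polyFun Q) x = 0) (m : ℕ) :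
    ∀ x : EuclideanSpace ℝ (Fin (n+1)), x ≠ 0 →
      (deltaTilde n a)^[m] (gFun c Q) x
        = (∏ j ∈ Finset.range m, ((c - 2*(j:ℝ)) * (c - 2*(j:ℝ) + 2*(k:ℝ) + (n:ℝ) + 2*a - 2)))
            * (‖x‖ ^ (c - 2*(m:ℝ)) * polyFun Q x) := by
  induction m with
  | zero =>
    intro x hx
    simp only [Function.iterate_zero, id_eq, Finset.range_zero, Finset.prod_empty, one_mul,
      Nat.cast_zero, mul_zero, sub_zero]
    rfl
  | succ m ih =>
    intro x hx
    rw [Function.iterate_succ_apply']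
    set A := ∏ j ∈ Finset.range m, ((c - 2*(j:ℝ)) * (c - 2*(j:ℝ) + 2*(k:ℝ) + (n:ℝ) + 2*a - 2))
      with hA_def
    have hfun : ∀ y : EuclideanSpace ℝ (Fin (n+1)), y ≠ 0 →
        (deltaTilde n a)^[m] (gFun c Q) y = gFun (c - 2*(m:ℝ)) (MvPolynomial.C A * Q) y := by
      intro y hy
      rw [ih y hy, gFun]
      simp only [polyFun, MvPolynomial.eval_mul, MvPolynomial.eval_C]
      ring
    have hcg := deltaTilde_congr (a := a)
      (Filter.eventuallyEq_of_mem ((isOpen_compl_singleton).mem_nhds hx) hfun)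
    rw [hcg, step_main n a k (c - 2*(m:ℝ)) (MvPolynomial.C A * Q) (hQ.C_mul A)
      (harm_C_mul A hharm) hx]
    rw [Finset.prod_range_succ]
    have hCA : polyFun (MvPolynomial.C A * Q) x = A * polyFun Q x := by
      simp [polyFun]
    rw [hCA]
    push_cast
    rw [show c - 2*((m:ℝ)+1) = c - 2*(m:ℝ) - 2 from by ring]
    ring

lemma gFun_eq {n : ℕ} {k : ℕ} {h : MvPolynomial (Fin (n+1)) ℝ} (hhom : h.IsHomogeneous k)
    (t : ℝ) : ∀ y : EuclideanSpace ℝ (Fin (n+1)), y ≠ 0 →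
      ‖y‖ ^ t * MvPolynomial.eval (fun i => y i / ‖y‖) h = gFun (t - (k:ℝ)) h y := by
  intro y hy
  have hny : (0:ℝ) < ‖y‖ := norm_pos_iff.mpr hy
  have hcoord : (fun i => y i / ‖y‖)
      = (fun i => (((‖y‖⁻¹ • y : EuclideanSpace ℝ (Fin (n+1)))) i)) := by
    funext i
    show y i / ‖y‖ = ‖y‖⁻¹ * y i
    rw [div_eq_inv_mul]
  have heval : MvPolynomial.eval (fun i => y i / ‖y‖) h
      = (‖y‖⁻¹) ^ k * polyFun h y := by
    rw [hcoord]
    exact polyFun_smul hhom (‖y‖⁻¹) y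
  rw [heval, gFun]
  have hinv : (‖y‖⁻¹ : ℝ) ^ k = ‖y‖ ^ (-(k:ℝ)) := by
    rw [Real.rpow_neg (norm_nonneg y), Real.rpow_natCast, inv_pow]
  rw [hinv, ← mul_assoc, ← Real.rpow_add hny]
  congr 2
  try ring

theorem stmt_18 (n : ℕ) (hn : 1 ≤ n) (a : ℝ) (k : ℕ)
    (h : MvPolynomial (Fin (n + 1)) ℝ) (hhom : h.IsHomogeneous k)
    (heven : ∀ x : Fin (n + 1) → ℝ,
      MvPolynomial.eval (Function.update x (Fin.last n) (-x (Fin.last n))) h =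
        MvPolynomial.eval x h)
    (hharm : ∀ x : EuclideanSpace ℝ (Fin (n + 1)),
      deltaTilde n a (fun y => MvPolynomial.eval (fun i => y i) h) x = 0)
    (t : ℝ) (m : ℕ) (hm : 1 ≤ m) :
    (∀ x : EuclideanSpace ℝ (Fin (n + 1)), x ≠ 0 →
      (deltaTilde n a)^[m]
          (fun y => ‖y‖ ^ t * MvPolynomial.eval (fun i => y i / ‖y‖) h) x =
        (∏ j ∈ Finset.range m,
            ((t - 2 * (j : ℝ)) * (t - 2 * (j : ℝ) + n + 2 * a - 2) -
              (k : ℝ) * ((k : ℝ) + n + 2 * a - 2))) *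
          (‖x‖ ^ (t - 2 * (m : ℝ)) * MvPolynomial.eval (fun i => x i / ‖x‖) h)) ∧
    (∀ x : EuclideanSpace ℝ (Fin (n + 1)), x ≠ 0 →
      (deltaTilde n a)^[m]
          (fun y => ‖y‖ ^ (2 * (m : ℝ) - n - 2 * a - t) *
            MvPolynomial.eval (fun i => y i / ‖y‖) h) x =
        (∏ j ∈ Finset.range m,
            ((t - 2 * (j : ℝ)) * (t - 2 * (j : ℝ) + n + 2 * a - 2) -
              (k : ℝ) * ((k : ℝ) + n + 2 * a - 2))) *
          (‖x‖ ^ (-(n : ℝ) - 2 * a - t) * MvPolynomial.eval (fun i => x i / ‖x‖) h)) ∧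
    (∏ j ∈ Finset.range m,
        ((2 * (m : ℝ) - n - 2 * a - t - 2 * (j : ℝ)) * (2 * (m : ℝ) - t - 2 * (j : ℝ) - 2) -
          (k : ℝ) * ((k : ℝ) + n + 2 * a - 2))) =
      ∏ j ∈ Finset.range m,
        ((t - 2 * (j : ℝ)) * (t - 2 * (j : ℝ) + n + 2 * a - 2) -
          (k : ℝ) * ((k : ℝ) + n + 2 * a - 2)) := by
  have hharmP : ∀ x, deltaTilde n a (polyFun h) x = 0 := hharm
  -- part 3
  have part3 : (∏ j ∈ Finset.range m,
        ((2 * (m : ℝ) - n - 2 * a - t - 2 * (j : ℝ)) * (2 * (m : ℝ) - t - 2 * (j : ℝ) - 2) -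
          (k : ℝ) * ((k : ℝ) + n + 2 * a - 2))) =
      ∏ j ∈ Finset.range m,
        ((t - 2 * (j : ℝ)) * (t - 2 * (j : ℝ) + n + 2 * a - 2) -
          (k : ℝ) * ((k : ℝ) + n + 2 * a - 2)) := by
    rw [← Finset.prod_range_reflect (fun j =>
      ((2 * (m : ℝ) - n - 2 * a - t - 2 * (j : ℝ)) * (2 * (m : ℝ) - t - 2 * (j : ℝ) - 2) -
        (k : ℝ) * ((k : ℝ) + n + 2 * a - 2))) m]
    apply Finset.prod_congr rfl
    intro j hj
    have hjm : j < m := Finset.mem_range.mp hj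
    have hcast : ((m - 1 - j : ℕ) : ℝ) = (m:ℝ) - 1 - (j:ℝ) := by
      rw [Nat.sub_sub, Nat.cast_sub (by omega)]
      push_cast
      ring
    rw [hcast]
    ring
  refine ⟨?_, ?_, part3⟩
  · intro x hx
    have h1 := iter_congr (a := a) m (gFun_eq hhom t) x hx
    rw [h1, iter_gFun n a k (t - (k:ℝ)) h hhom hharmP m x hx,
      gFun_eq hhom (t - 2 * (m:ℝ)) x hx, gFun,
      show t - 2 * (m:ℝ) - (k:ℝ) = t - (k:ℝ) - 2 * (m:ℝ) from by ring]
    congr 1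
    apply Finset.prod_congr rfl
    intro j _
    ring
  · intro x hx
    have h1 := iter_congr (a := a) m (gFun_eq hhom (2 * (m:ℝ) - n - 2*a - t)) x hx
    rw [h1, iter_gFun n a k (2 * (m:ℝ) - n - 2*a - t - (k:ℝ)) h hhom hharmP m x hx,
      gFun_eq hhom (-(n:ℝ) - 2*a - t) x hx, gFun,
      show -(n:ℝ) - 2*a - t - (k:ℝ) = 2 * (m:ℝ) - (n:ℝ) - 2*a - t - (k:ℝ) - 2 * (m:ℝ) from by ring]
    congr 1
    rw [← part3]
    apply Finset.prod_congr rfl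
    intro j _
    ring
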